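/- For all θ ∈ [0, π), (2cos(θ/2) - 1)² ≥ (1 - 3θ/(2π))². -/

import Mathlib

open Real

theorem stmt_1 (θ : ℝ) (hθ : θ ∈ Set.Ico 0 π) :
    (2 * Real.cos (θ/2) - 1)^2 ≥ (1 - 3*θ/(2*π))^2 := by
  obtain ⟨h0, h1⟩ := hθ
  have hpi := Real.pi_pos
  have hcc := strictConcaveOn_cos_Icc.concaveOn
  have hm0 : (0:ℝ) ∈ Set.Icc (-(π/2)) (π/2) := ⟨by linarith, by linarith⟩
  rcases le_or_gt (θ/2) (π/3) with hc | hc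
  · have hm3 : π/3 ∈ Set.Icc (-(π/2)) (π/2) := ⟨by linarith, by linarith⟩
    have ha : (0:ℝ) ≤ 1 - 3*θ/(2*π) := by
      rw [sub_nonneg, div_le_one (by linarith)]; linarith
    have hb : (0:ℝ) ≤ 3*θ/(2*π) := by positivity
    have hab : (1 - 3*θ/(2*π)) + 3*θ/(2*π) = 1 := by ring
    have key := hcc.2 hm0 hm3 ha hb hab
    have hpt : (1 - 3*θ/(2*π)) • (0:ℝ) + (3*θ/(2*π)) • (π/3) = θ/2 := by
      simp only [smul_eq_mul]; field_simp; ring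
    rw [hpt, Real.cos_zero, Real.cos_pi_div_three] at key
    simp only [smul_eq_mul] at key
    have hb1 : 3*θ/(2*π) ≤ 1 := by rw [div_le_one (by linarith)]; linarith
    nlinarith [key, hb1, Real.pi_pos]
  · have hx0 : (0:ℝ) < θ/2 := by linarith
    have hθ0 : (0:ℝ) < θ := by linarith
    have hmx : θ/2 ∈ Set.Icc (-(π/2)) (π/2) := ⟨by linarith, by linarith⟩
    have ha : (0:ℝ) ≤ 1 - (2*π/3)/θ := by
      rw [sub_nonneg, div_le_one (by linarith)]; linarith
    have hb : (0:ℝ) ≤ (2*π/3)/θ := by positivity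
    have hab : (1 - (2*π/3)/θ) + (2*π/3)/θ = 1 := by ring
    have key := hcc.2 hm0 hmx ha hb hab
    have hpt : (1 - (2*π/3)/θ) • (0:ℝ) + ((2*π/3)/θ) • (θ/2) = π/3 := by
      simp only [smul_eq_mul]; field_simp; ring
    rw [hpt, Real.cos_zero, Real.cos_pi_div_three] at key
    simp only [smul_eq_mul] at key
    have e1 : ((1 - 2*π/3/θ) * 1 + 2*π/3/θ * Real.cos (θ/2)) * θ
        = θ - 2*π/3 + 2*π/3 * Real.cos (θ/2) := by
      field_simp
    have key2 := mul_le_mul_of_nonneg_right key (le_of_lt hθ0)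
    rw [e1] at key2
    -- key2 : θ - 2π/3 + 2π/3 * cos(θ/2) ≤ 1/2 * θ
    have hcos : 4*π*Real.cos (θ/2) ≤ 4*π - 3*θ := by linarith
    have hfg : 2*Real.cos (θ/2) - 1 ≤ 1 - 3*θ/(2*π) := by
      have : 3*θ/(2*π) ≤ 2 - 2*Real.cos (θ/2) := by
        rw [div_le_iff₀ (by linarith)]; nlinarith
      linarith
    have hG : 1 - 3*θ/(2*π) ≤ 0 := by
      rw [sub_nonpos, le_div_iff₀ (by linarith)]; linarith
    nlinarith [hfg, hG]
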